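/- Let 0 → M →^i E →^p G → 1 be an extension with abelian kernel, N ⊴ G with quotient Q = G/N, and H ≤ E a partial semi-direct complement of N such that every E-conjugate of H equals some i(m)Hi(m)⁻¹. Then the sequence 0 → M^N → N_E(H) → G → 1 is exact, H is normal in N_E(H), and the induced sequence 0 → M^N → N_E(H)/H → Q → 1 is exact. -/

import Mathlib

/-- Let `0 → M →ⁱ E →ᵖ G → 1` be an extension with abelian kernel, `N ⊴ G`
with quotient `Q = G/N`, and `H ≤ E` a partial semi-direct complement of `N` such that every
`E`-conjugate of `H` is `i(M)`-conjugate to `H`. Then `0 → M^N → N_E(H) → G → 1` is exact,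
`H` is normal in `N_E(H)`, and the induced sequence `0 → M^N → N_E(H)/H → Q → 1` is exact
(expressed here on the level of representatives: the image of `M^N` meets `H` trivially, and
an element of `N_E(H)` maps into `N` iff it lies in `i(M^N)·H`). -/
theorem seven_term_normalizer_sequence (M E G : Type*) [CommGroup M] [Group E] [Group G]
    (i : M →* E) (p : E →* G) (hi : Function.Injective i) (hp : Function.Surjective p)
    (hex : i.range = p.ker)
    (N : Subgroup G) (hN : N.Normal)
    (H : Subgroup E) (hH1 : Subgroup.map p H = N) (hH2 : Set.InjOn p (H : Set E))
    (hinv : ∀ e : E, ∃ m : M,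
      Subgroup.map (MulAut.conj e).toMonoidHom H
        = Subgroup.map (MulAut.conj (i m)).toMonoidHom H)
    (MN : Set M) (hMN : MN = {m : M | ∀ e : E, p e ∈ N → e * i m * e⁻¹ = i m}) :
    (∀ m ∈ MN, i m ∈ Subgroup.normalizer (H : Set E)) ∧
    (∀ g : G, ∃ x ∈ Subgroup.normalizer (H : Set E), p x = g) ∧
    (∀ x ∈ Subgroup.normalizer (H : Set E), (p x = 1 ↔ ∃ m ∈ MN, i m = x)) ∧
    (H ≤ Subgroup.normalizer (H : Set E) ∧ ∀ x ∈ Subgroup.normalizer (H : Set E), ∀ h ∈ H, x * h * x⁻¹ ∈ H) ∧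
    (∀ x ∈ Subgroup.normalizer (H : Set E), (p x ∈ N ↔ ∃ m ∈ MN, ∃ h ∈ H, x = i m * h)) ∧
    (∀ m ∈ MN, i m ∈ H → m = 1) := by
  have pi1 : ∀ m : M, p (i m) = 1 := by
    intro m
    have : i m ∈ p.ker := hex ▸ ⟨m, rfl⟩
    exact this
  have memN : ∀ h ∈ H, p h ∈ N := by
    intro h hh
    rw [← hH1]; exact ⟨h, hh, rfl⟩
  -- elements of i(M) in the normalizer commute with H
  have key : ∀ m : M, i m ∈ Subgroup.normalizer (H : Set E) → ∀ h ∈ H, i m * h * (i m)⁻¹ = h := by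
    intro m hm h hh
    have h1 : i m * h * (i m)⁻¹ ∈ H := (Subgroup.mem_normalizer_iff.mp hm h).mp hh
    apply hH2 h1 hh
    simp [map_mul, map_inv, pi1]
  have mem_MN : ∀ m : M, m ∈ MN ↔ i m ∈ Subgroup.normalizer (H : Set E) := by
    intro m
    constructor
    · intro hm
      rw [hMN] at hm
      rw [Subgroup.mem_normalizer_iff]
      intro h
      constructor
      · intro hh
        have e1 : h * i m * h⁻¹ = i m := hm h (memN h hh)
        have e2 : i m * h * (i m)⁻¹ = h := by
          have : h * i m = i m * h := by
            calc h * i m = (h * i m * h⁻¹) * h := by group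
            _ = i m * h := by rw [e1]
          calc i m * h * (i m)⁻¹ = h * i m * (i m)⁻¹ := by rw [← this]
          _ = h := by group
        rw [e2]; exact hh
      · intro hh
        have e1 : (i m * h * (i m)⁻¹) * i m * (i m * h * (i m)⁻¹)⁻¹ = i m :=
          hm _ (memN _ hh)
        have e2 : (i m * h * (i m)⁻¹) * i m = i m * (i m * h * (i m)⁻¹) := by
          calc (i m * h * (i m)⁻¹) * i m
              = ((i m * h * (i m)⁻¹) * i m * (i m * h * (i m)⁻¹)⁻¹) * (i m * h * (i m)⁻¹) := by
                group
          _ = i m * (i m * h * (i m)⁻¹) := by rw [e1]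
        have : h = i m * h * (i m)⁻¹ := by
          have := e2
          calc h = (i m)⁻¹ * ((i m * h * (i m)⁻¹) * i m) := by group
          _ = (i m)⁻¹ * (i m * (i m * h * (i m)⁻¹)) := by rw [e2]
          _ = i m * h * (i m)⁻¹ := by group
        rw [this]; exact hh
    · intro hm
      rw [hMN]
      intro e he
      obtain ⟨h, hh, hph⟩ : ∃ h ∈ H, p h = p e := by
        rw [← hH1] at he
        obtain ⟨h, hh, hph⟩ := he
        exact ⟨h, hh, hph⟩
      have hker : e * h⁻¹ ∈ i.range := by
        rw [hex]
        show p (e * h⁻¹) = 1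
        simp [map_mul, hph]
      obtain ⟨m', hm'⟩ := hker
      have he' : e = i m' * h := by rw [hm']; group
      have hk := key m hm h hh
      have comm : i m * h = h * i m := by
        calc i m * h = (i m * h * (i m)⁻¹) * i m := by group
        _ = h * i m := by rw [hk]
      have hcomm : h * i m * h⁻¹ = i m := by rw [← comm]; group
      have comm' : i m' * i m = i m * i m' := by
        rw [← map_mul, ← map_mul, mul_comm]
      rw [he']
      calc (i m' * h) * i m * (i m' * h)⁻¹ = i m' * (h * i m * h⁻¹) * (i m')⁻¹ := by group
      _ = i m' * i m * (i m')⁻¹ := by rw [hcomm]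
      _ = i m * i m' * (i m')⁻¹ := by rw [comm']
      _ = i m := by group
  refine ⟨fun m hm => (mem_MN m).mp hm, ?_, ?_, ?_, ?_, ?_⟩
  · -- surjectivity
    intro g
    obtain ⟨e, he⟩ := hp g
    obtain ⟨m, hmeq⟩ := hinv e
    refine ⟨(i m)⁻¹ * e, ?_, by simp [map_mul, map_inv, pi1, he]⟩
    rw [Subgroup.mem_normalizer_iff]
    intro h
    constructor
    · intro hh
      have h1 : e * h * e⁻¹ ∈ Subgroup.map (MulAut.conj (i m)).toMonoidHom H := by
        rw [← hmeq]
        exact ⟨h, hh, by simp⟩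
      obtain ⟨k, hk, hkeq⟩ := h1
      simp only [MulEquiv.coe_toMonoidHom, MulAut.conj_apply] at hkeq
      have hk2 : k = (i m)⁻¹ * (e * h * e⁻¹) * i m := by rw [← hkeq]; group
      have : (i m)⁻¹ * e * h * ((i m)⁻¹ * e)⁻¹ = k := by rw [hk2]; group
      rw [this]; exact hk
    · intro hh
      have h1 : e * h * e⁻¹ ∈ Subgroup.map (MulAut.conj e).toMonoidHom H := by
        rw [hmeq]
        refine ⟨(i m)⁻¹ * e * h * ((i m)⁻¹ * e)⁻¹, hh, ?_⟩
        simp only [MulEquiv.coe_toMonoidHom, MulAut.conj_apply]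
        group
      obtain ⟨k, hk, hkeq⟩ := h1
      simp only [MulEquiv.coe_toMonoidHom, MulAut.conj_apply] at hkeq
      have h2 : e * k = e * h := by
        have h3 : e * k * e⁻¹ = e * h * e⁻¹ := by simpa using hkeq
        exact mul_right_cancel h3
      have : h = k := (mul_left_cancel h2).symm
      rw [this]; exact hk
  · -- exactness at N_E(H): p x = 1 ↔ x ∈ i(MN)
    intro x hx
    constructor
    · intro hpx
      have : x ∈ i.range := by rw [hex]; exact hpx
      obtain ⟨m, rfl⟩ := this
      exact ⟨m, (mem_MN m).mpr hx, rfl⟩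
    · rintro ⟨m, hm, rfl⟩
      exact pi1 m
  · exact ⟨Subgroup.le_normalizer,
      fun x hx h hh => (Subgroup.mem_normalizer_iff.mp hx h).mp hh⟩
  · -- p x ∈ N ↔ x ∈ i(MN)·H
    intro x hx
    constructor
    · intro hpx
      obtain ⟨h, hh, hph⟩ : ∃ h ∈ H, p h = p x := by
        rw [← hH1] at hpx
        obtain ⟨h, hh, hph⟩ := hpx
        exact ⟨h, hh, hph⟩
      have hker : x * h⁻¹ ∈ i.range := by
        rw [hex]
        show p (x * h⁻¹) = 1
        simp [map_mul, hph]
      obtain ⟨m, hm⟩ := hker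
      have hmnorm : i m ∈ Subgroup.normalizer (H : Set E) := by
        rw [hm]
        exact mul_mem hx (inv_mem (Subgroup.le_normalizer hh))
      exact ⟨m, (mem_MN m).mpr hmnorm, h, hh, by rw [hm]; group⟩
    · rintro ⟨m, hm, h, hh, rfl⟩
      have : p (i m * h) = p h := by simp [map_mul, pi1]
      rw [this]
      exact memN h hh
  · -- triviality of i(MN) ∩ H
    intro m hm hmH
    have h1 : p (i m) = p 1 := by simp [pi1]
    have := hH2 hmH H.one_mem h1
    exact hi (by simpa using this)
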